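/- Let a, b, c, d ∈ ℂ² with c and d linearly independent, and let n ≥ 3. If a^{⊗n} + b^{⊗n} = c^{⊗n} + d^{⊗n}, then there exist φ, ψ ∈ ℂ with φⁿ = ψⁿ = 1 such that either a = φc and b = ψd, or a = φd and b = ψc. -/

import Mathlib

open Polynomial Finset

lemma card_filt (n k : ℕ) (hk : k ≤ n) :
    (Finset.univ.filter fun i : Fin n => (i : ℕ) < k).card = k := by
  rcases lt_or_eq_of_le hk with hk' | rfl
  · have : (Finset.univ.filter fun i : Fin n => (i : ℕ) < k) = Finset.Iio ⟨k, hk'⟩ := by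
      ext i; simp [Fin.lt_def]
    rw [this, Fin.card_Iio]
  · rw [Finset.filter_true_of_mem (fun i _ => i.isLt)]
    simp

lemma prod_pattern (n k : ℕ) (hk : k ≤ n) (v : ZMod 2 → ℂ) :
    (∏ i : Fin n, v (if (i : ℕ) < k then 0 else 1)) = v 0 ^ k * v 1 ^ (n - k) := by
  simp only [apply_ite v]
  rw [Finset.prod_ite]
  simp only [Finset.prod_const]
  rw [card_filt n k hk]
  congr 1
  have : (Finset.univ.filter fun i : Fin n => ¬ (i : ℕ) < k).card = n - k := by
    have := Finset.card_filter_add_card_filter_not (s := (Finset.univ : Finset (Fin n)))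
      (p := fun i : Fin n => (i : ℕ) < k)
    rw [card_filt n k hk] at this
    simp only [Finset.card_univ, Fintype.card_fin] at this
    omega
  rw [this]

lemma coeff_lin_pow (α β : ℂ) (n k : ℕ) (hk : k ≤ n) :
    (((C α) * X + C β) ^ n).coeff k = α ^ k * β ^ (n - k) * (n.choose k) := by
  rw [add_pow]
  have hterms : ∀ j ∈ Finset.range (n + 1),
      (C α * X) ^ j * (C β) ^ (n - j) * (n.choose j : ℂ[X]) =
        C (α ^ j * β ^ (n - j) * (n.choose j : ℂ)) * X ^ j := by
    intro j _
    rw [C_mul, C_mul, Polynomial.C_eq_natCast, mul_pow, ← C_pow, ← C_pow]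
    ring
  rw [Finset.sum_congr rfl hterms, Polynomial.finset_sum_coeff]
  simp only [coeff_C_mul_X_pow]
  rw [Finset.sum_ite_eq (Finset.range (n + 1)) k]
  simp [Nat.lt_succ_iff, hk]

lemma alg_main (m : ℕ) (α β γ δ : ℂ)
    (h1 : α * β ^ (m+2) + γ * δ ^ (m+2) = 0)
    (h3 : α ^ (m+2) * β + γ ^ (m+2) * δ = 0)
    (h2 : α ^ 2 * β ^ (m+1) + γ ^ 2 * δ ^ (m+1) = 0)
    (hn : α ^ (m+3) + γ ^ (m+3) = 1)
    (h0 : β ^ (m+3) + δ ^ (m+3) = 1) :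
    (β = 0 ∧ γ = 0 ∧ α ^ (m+3) = 1 ∧ δ ^ (m+3) = 1) ∨
    (α = 0 ∧ δ = 0 ∧ β ^ (m+3) = 1 ∧ γ ^ (m+3) = 1) := by
  by_cases hα : α = 0
  · right
    have hγn : γ ^ (m+3) = 1 := by
      rw [hα, zero_pow (by omega : m+3 ≠ 0), zero_add] at hn; exact hn
    have hγ : γ ≠ 0 := by
      intro hg; rw [hg, zero_pow (by omega : m+3 ≠ 0)] at hγn
      exact zero_ne_one hγn
    have hδ : δ = 0 := by
      have hz : γ * δ ^ (m+2) = 0 := by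
        rw [hα, zero_mul, zero_add] at h1; exact h1
      rcases mul_eq_zero.mp hz with hg | hd
      · exact absurd hg hγ
      · exact pow_eq_zero_iff (by omega : m+2 ≠ 0) |>.mp hd
    have hβn : β ^ (m+3) = 1 := by
      rw [hδ, zero_pow (by omega : m+3 ≠ 0), add_zero] at h0; exact h0
    exact ⟨hα, hδ, hβn, hγn⟩
  · by_cases hβ : β = 0
    · left
      have hδn : δ ^ (m+3) = 1 := by
        rw [hβ, zero_pow (by omega : m+3 ≠ 0), zero_add] at h0; exact h0
      have hδ : δ ≠ 0 := by
        intro hd; rw [hd, zero_pow (by omega : m+3 ≠ 0)] at hδn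
        exact zero_ne_one hδn
      have hγ : γ = 0 := by
        have hz : γ ^ (m+2) * δ = 0 := by
          rw [hβ, mul_zero, zero_add] at h3; exact h3
        rcases mul_eq_zero.mp hz with hg | hd
        · exact pow_eq_zero_iff (by omega : m+2 ≠ 0) |>.mp hg
        · exact absurd hd hδ
      have hαn : α ^ (m+3) = 1 := by
        rw [hγ, zero_pow (by omega : m+3 ≠ 0), add_zero] at hn; exact hn
      exact ⟨hβ, hγ, hαn, hδn⟩
    · exfalso
      have hγδ : γ * δ ^ (m+2) ≠ 0 := by
        intro hz
        have hab : α * β ^ (m+2) = 0 := by linear_combination h1 - hz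
        rcases mul_eq_zero.mp hab with ha | hb
        · exact hα ha
        · exact hβ (pow_eq_zero_iff (by omega : m+2 ≠ 0) |>.mp hb)
      have hγ : γ ≠ 0 := fun hg => hγδ (by rw [hg, zero_mul])
      have hδ : δ ≠ 0 := fun hd => hγδ (by rw [hd, zero_pow (by omega : m+2 ≠ 0), mul_zero])
      have key : (β ^ (m+3) + δ ^ (m+3)) * (γ ^ 2 * δ ^ (m+1)) = 0 := by
        linear_combination (β ^ (m+3)) * h2 + (γ * δ ^ (m+2) - α * β ^ (m+2)) * h1
      rw [h0, one_mul] at key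
      exact mul_ne_zero (pow_ne_zero _ hγ) (pow_ne_zero _ hδ) key

/-- rigidity of rank-2 symmetric tensor decompositions. -/
theorem tensor_power_decomposition (n : ℕ) (hn : 3 ≤ n)
    (a b c d : ZMod 2 → ℂ)
    (hcd : LinearIndependent ℂ ![c, d])
    (h : ∀ x : Fin n → ZMod 2,
      (∏ i, a (x i)) + (∏ i, b (x i)) = (∏ i, c (x i)) + (∏ i, d (x i))) :
    ∃ φ ψ : ℂ, φ ^ n = 1 ∧ ψ ^ n = 1 ∧
      ((a = φ • c ∧ b = ψ • d) ∨ (a = φ • d ∧ b = ψ • c)) := by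
  -- determinant nonzero
  have pair := LinearIndependent.pair_iff.mp hcd
  have hz2 : ∀ z : ZMod 2, z = 0 ∨ z = 1 := by decide
  have hdet : c 0 * d 1 - c 1 * d 0 ≠ 0 := by
    intro hD
    have e1 := pair (d 0) (-(c 0)) (by
      funext z
      rcases hz2 z with rfl | rfl
      · show d 0 * c 0 + -(c 0) * d 0 = 0
        ring
      · show d 0 * c 1 + -(c 0) * d 1 = 0
        linear_combination -hD)
    have e2 := pair (d 1) (-(c 1)) (by
      funext z
      rcases hz2 z with rfl | rfl
      · show d 1 * c 0 + -(c 1) * d 0 = 0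
        linear_combination hD
      · show d 1 * c 1 + -(c 1) * d 1 = 0
        ring)
    have e3 := pair 1 0 (by
      funext z
      rcases hz2 z with rfl | rfl
      · show 1 * c 0 + 0 * d 0 = 0
        rw [neg_eq_zero.mp e1.2]; ring
      · show 1 * c 1 + 0 * d 1 = 0
        rw [neg_eq_zero.mp e2.2]; ring)
    exact one_ne_zero e3.1
  -- coefficient equations from evaluations
  have E : ∀ k ≤ n, a 0 ^ k * a 1 ^ (n-k) + b 0 ^ k * b 1 ^ (n-k)
      = c 0 ^ k * c 1 ^ (n-k) + d 0 ^ k * d 1 ^ (n-k) := by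
    intro k hk
    have := h (fun i => if (i : ℕ) < k then 0 else 1)
    rwa [prod_pattern n k hk a, prod_pattern n k hk b, prod_pattern n k hk c,
      prod_pattern n k hk d] at this
  -- two-variable functional identity
  have tv : ∀ s t : ℂ, (s * a 0 + t * a 1) ^ n + (s * b 0 + t * b 1) ^ n
      = (s * c 0 + t * c 1) ^ n + (s * d 0 + t * d 1) ^ n := by
    intro s t
    have expand : ∀ v : ZMod 2 → ℂ, (s * v 0 + t * v 1) ^ n
        = ∑ k ∈ Finset.range (n+1), (v 0 ^ k * v 1 ^ (n-k)) * (s ^ k * t ^ (n-k) * (n.choose k)) := by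
      intro v
      rw [add_pow]
      exact Finset.sum_congr rfl (fun k _ => by ring)
    rw [expand a, expand b, expand c, expand d, ← Finset.sum_add_distrib,
      ← Finset.sum_add_distrib]
    refine Finset.sum_congr rfl (fun k hk => ?_)
    rw [← add_mul, ← add_mul, E k (Nat.lt_succ_iff.mp (Finset.mem_range.mp hk))]
  -- coordinates of a, b in the basis (c, d)
  obtain ⟨α, β, γ, δ, hA, hB⟩ : ∃ α β γ δ : ℂ,
      (∀ z, a z = α * c z + β * d z) ∧ (∀ z, b z = γ * c z + δ * d z) := by
    refine ⟨(d 1 * a 0 - d 0 * a 1) / (c 0 * d 1 - c 1 * d 0),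
      (c 0 * a 1 - c 1 * a 0) / (c 0 * d 1 - c 1 * d 0),
      (d 1 * b 0 - d 0 * b 1) / (c 0 * d 1 - c 1 * d 0),
      (c 0 * b 1 - c 1 * b 0) / (c 0 * d 1 - c 1 * d 0), ?_, ?_⟩ <;>
    · intro z
      rcases hz2 z with rfl | rfl <;> (rw [div_mul_eq_mul_div, div_mul_eq_mul_div, ← add_div, eq_div_iff hdet]; ring)
  -- dual substitution
  have dual : ∀ u v : ℂ, ∃ s t : ℂ, s * c 0 + t * c 1 = u ∧ s * d 0 + t * d 1 = v := by
    intro u v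
    refine ⟨(u * d 1 - v * c 1) / (c 0 * d 1 - c 1 * d 0),
      (v * c 0 - u * d 0) / (c 0 * d 1 - c 1 * d 0), ?_, ?_⟩ <;> (rw [div_mul_eq_mul_div, div_mul_eq_mul_div, ← add_div, div_eq_iff hdet]; ring)
  -- one-variable identity
  have ov : ∀ u : ℂ, (α * u + β) ^ n + (γ * u + δ) ^ n = u ^ n + 1 := by
    intro u
    obtain ⟨s, t, hc, hd⟩ := dual u 1
    have key := tv s t
    have ha' : s * a 0 + t * a 1 = α * u + β := by
      rw [hA 0, hA 1]; linear_combination α * hc + β * hd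
    have hb' : s * b 0 + t * b 1 = γ * u + δ := by
      rw [hB 0, hB 1]; linear_combination γ * hc + δ * hd
    rw [ha', hb', hc, hd, one_pow] at key
    exact key
  -- polynomial identity
  have hP : ((C α * X + C β) ^ n + (C γ * X + C δ) ^ n : ℂ[X]) = X ^ n + 1 := by
    apply Polynomial.funext
    intro u
    simpa using ov u
  have coeffEq : ∀ k, k ≤ n →
      α ^ k * β ^ (n-k) * (n.choose k : ℂ) + γ ^ k * δ ^ (n-k) * (n.choose k : ℂ)
      = (if k = n then 1 else 0) + (if k = 0 then 1 else 0) := by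
    intro k hk
    have := congrArg (fun p : ℂ[X] => p.coeff k) hP
    simpa [coeff_lin_pow α β n k hk, coeff_lin_pow γ δ n k hk,
      Polynomial.coeff_X_pow, Polynomial.coeff_one] using this
  have hch : ∀ k ≤ n, (n.choose k : ℂ) ≠ 0 := fun k hk =>
    Nat.cast_ne_zero.mpr (Nat.choose_pos hk).ne'
  have Emid : ∀ k, 0 < k → k < n → α ^ k * β ^ (n-k) + γ ^ k * δ ^ (n-k) = 0 := by
    intro k h1 h2
    have e := coeffEq k h2.le
    rw [if_neg (by omega), if_neg (by omega), add_zero] at e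
    have : (α ^ k * β ^ (n-k) + γ ^ k * δ ^ (n-k)) * (n.choose k : ℂ) = 0 := by
      rw [add_mul]; exact e
    exact (mul_eq_zero.mp this).resolve_right (hch k h2.le)
  have En : α ^ n + γ ^ n = 1 := by
    have e := coeffEq n le_rfl
    rw [if_pos rfl, if_neg (by omega)] at e
    simpa using e
  have E0 : β ^ n + δ ^ n = 1 := by
    have e := coeffEq 0 (by omega)
    rw [if_neg (by omega), if_pos rfl] at e
    simpa using e
  -- reduce to the algebraic lemma
  obtain ⟨m, rfl⟩ : ∃ m, n = m + 3 := ⟨n - 3, by omega⟩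
  have h1 := Emid 1 (by omega) (by omega)
  have h2 := Emid 2 (by omega) (by omega)
  have h3 := Emid (m+2) (by omega) (by omega)
  rw [show m+3-1 = m+2 from rfl, pow_one, pow_one] at h1
  rw [show m+3-2 = m+1 from rfl] at h2
  rw [show m+3-(m+2) = 1 by omega, pow_one, pow_one] at h3
  rcases alg_main m α β γ δ h1 h3 h2 En E0 with
    ⟨hβ0, hγ0, hαn, hδn⟩ | ⟨hα0, hδ0, hβn, hγn⟩
  · refine ⟨α, δ, hαn, hδn, Or.inl ⟨?_, ?_⟩⟩
    · funext z; rw [hA z, hβ0]; simp [Pi.smul_apply, smul_eq_mul]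
    · funext z; rw [hB z, hγ0]; simp [Pi.smul_apply, smul_eq_mul]
  · refine ⟨β, γ, hβn, hγn, Or.inr ⟨?_, ?_⟩⟩
    · funext z; rw [hA z, hα0]; simp [Pi.smul_apply, smul_eq_mul]
    · funext z; rw [hB z, hδ0]; simp [Pi.smul_apply, smul_eq_mul]
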